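/- Let γ be a Gaussian integer that is primitive (not divisible by any rational prime) and coprime to 2, and let m be a positive integer dividing the norm N(γ). Then there are exactly four Gaussian integers λ, all associates of one another, such that λ divides γ and N(λ) = m; moreover exactly one of these four has real part that is positive and odd. -/

import Mathlib

open Zsqrtd
set_option synthInstance.maxHeartbeats 1000000
set_option maxHeartbeats 1000000
set_option linter.unusedVariables false
namespace StmtHelper


lemma norm_def (x : GaussianInt) : x.norm = x.re*x.re + x.im*x.im := by
  simp [Zsqrtd.norm]

lemma unit_cases {u : GaussianInt} (hu : IsUnit u) :
    u = 1 ∨ u = -1 ∨ u = ⟨0,1⟩ ∨ u = ⟨0,-1⟩ := by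
  have h1 : u.norm = 1 := by
    have := Zsqrtd.norm_eq_one_iff.mpr hu
    have h0 := GaussianInt.norm_nonneg u
    omega
  rw [norm_def] at h1
  obtain ⟨a,b⟩ := u
  simp only at h1
  have h1a : -1 ≤ a := by nlinarith
  have h2a : a ≤ 1 := by nlinarith
  have h1b : -1 ≤ b := by nlinarith
  have h2b : b ≤ 1 := by nlinarith
  interval_cases a <;> interval_cases b <;> simp_all [Zsqrtd.ext_iff]

lemma norm_odd {γ : GaussianInt} (hcop : IsCoprime (2 : GaussianInt) γ) :
    ¬ (2:ℤ) ∣ γ.norm := by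
  intro h2
  have heven : Even (γ.re*γ.re + γ.im*γ.im) := by
    rw [← norm_def]; obtain ⟨c, hc⟩ := h2; exact ⟨c, by omega⟩
  rw [Int.even_add, Int.even_mul, Int.even_mul, or_self, or_self] at heven
  have hsum : Even (γ.re + γ.im) := Int.even_add.mpr heven
  have hsub : Even (γ.im - γ.re) := Int.even_sub.mpr heven.symm
  obtain ⟨x, hx⟩ := hsum
  obtain ⟨y, hy⟩ := hsub
  have hd1 : (⟨1,1⟩ : GaussianInt) ∣ γ := by
    refine ⟨⟨x, y⟩, ?_⟩
    rw [Zsqrtd.ext_iff]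
    constructor <;> simp <;> omega
  have hd2 : (⟨1,1⟩ : GaussianInt) ∣ 2 := by
    refine ⟨⟨1, -1⟩, ?_⟩
    rw [Zsqrtd.ext_iff]
    constructor <;> simp
  have := hcop.isUnit_of_dvd' hd2 hd1
  have h1 := Zsqrtd.norm_eq_one_iff.mpr this
  simp [norm_def] at h1

lemma prime_of_norm_prime {z : GaussianInt} (h : Prime z.norm) : Prime z := by
  rw [← irreducible_iff_prime]
  constructor
  · intro hu
    exact h.not_unit (Int.isUnit_iff_natAbs_eq.mpr (Zsqrtd.norm_eq_one_iff.mpr hu))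
  · intro x y hxy
    have hn : z.norm = x.norm * y.norm := by rw [hxy, Zsqrtd.norm_mul]
    rcases h.irreducible.isUnit_or_isUnit hn with hx | hy
    · left
      rw [← Zsqrtd.norm_eq_one_iff]
      rcases Int.isUnit_iff.mp hx with h' | h' <;> simp [h']
    · right
      rw [← Zsqrtd.norm_eq_one_iff]
      rcases Int.isUnit_iff.mp hy with h' | h' <;> simp [h']

lemma star_dvd {a b : GaussianInt} (h : a ∣ b) : star a ∣ star b :=
  map_dvd (starRingEnd GaussianInt) h

lemma cast_dvd_mul_conj {n : ℤ} {γ : GaussianInt} (h : n ∣ γ.norm) :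
    (n : GaussianInt) ∣ γ * star γ := by
  rw [← Zsqrtd.norm_eq_mul_conj]
  exact map_dvd (Int.castRingHom GaussianInt) h

lemma exists_prime_norm (γ : GaussianInt)
    (hprim : ∀ p : ℕ, p.Prime → ¬ ((p : GaussianInt) ∣ γ))
    (hodd : ¬ (2:ℤ) ∣ γ.norm) {p : ℕ} (hp : p.Prime) (hpd : (p:ℤ) ∣ γ.norm) :
    ∃ π : GaussianInt, Prime π ∧ π ∣ γ ∧ π.norm = p := by
  haveI : Fact p.Prime := ⟨hp⟩
  have hmod : p % 4 ≠ 3 := by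
    intro h3
    have hpr : Prime (p : GaussianInt) :=
      (GaussianInt.prime_iff_mod_four_eq_three_of_nat_prime p).mpr h3
    have hdd := cast_dvd_mul_conj hpd
    rcases hpr.dvd_mul.mp (by exact_mod_cast hdd) with h | h
    · exact hprim p hp h
    · exact hprim p hp (by simpa using star_dvd h)
  obtain ⟨a, b, hab⟩ := Nat.Prime.sq_add_sq hmod
  set π₀ : GaussianInt := ⟨(a:ℤ), (b:ℤ)⟩ with hπ₀
  have hnorm : π₀.norm = p := by
    rw [norm_def]
    push_cast [← hab]
    ring
  have hπprime : Prime π₀ := prime_of_norm_prime (by rw [hnorm]; exact Int.prime_iff_natAbs_prime.mpr (by simpa using hp))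
  have hπp : π₀ ∣ (p : GaussianInt) := by
    have h' : ((π₀.norm : ℤ) : GaussianInt) = π₀ * star π₀ := Zsqrtd.norm_eq_mul_conj π₀
    rw [hnorm] at h'
    exact ⟨star π₀, by exact_mod_cast h'⟩
  have hdd : π₀ ∣ γ * star γ := dvd_trans hπp (by exact_mod_cast cast_dvd_mul_conj hpd)
  rcases hπprime.dvd_mul.mp hdd with h | h
  · exact ⟨π₀, hπprime, h, hnorm⟩
  · refine ⟨star π₀, prime_of_norm_prime ?_, by simpa using star_dvd h, ?_⟩
    · rw [Zsqrtd.norm_conj, hnorm]; exact Int.prime_iff_natAbs_prime.mpr (by simpa using hp)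
    · rw [Zsqrtd.norm_conj, hnorm]




lemma prime_not_sq {p : ℕ} (hp : p.Prime) {a : ℤ} (h : (p:ℤ) = a * a) : False := by
  have h1 : (a.natAbs * a.natAbs : ℤ) = p := by
    rw [Int.natAbs_mul_self', ← h]
  have h2 : a.natAbs * a.natAbs = p := by exact_mod_cast h1
  have hd : a.natAbs ∣ p := ⟨a.natAbs, h2.symm⟩
  have h3 := hp.two_le
  rcases (Nat.Prime.eq_one_or_self_of_dvd hp _ hd) with h4 | h4 <;> nlinarith

lemma not_two_dvd {p : ℕ} (hp : p.Prime) (hp2 : p ≠ 2) {b : ℤ} (h : (p:ℤ) = 2 * (b * b)) :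
    False := by
  have h1 : (2:ℤ) ∣ (p:ℤ) := ⟨b*b, h⟩
  have h2 : 2 ∣ p := by exact_mod_cast h1
  rcases hp.eq_one_or_self_of_dvd 2 h2 with h | h <;> omega

lemma not_star_dvd_self' {π : GaussianInt} {p : ℕ} (hp : p.Prime) (hp2 : p ≠ 2)
    (hn : π.norm = p) (hπ : Prime π) (hstar : Prime (star π)) : ¬ (star π ∣ π) := by
  intro hdvd
  obtain ⟨u, hu⟩ := hstar.associated_of_dvd hπ hdvd
  have hcases : (u:GaussianInt) = 1 ∨ (u:GaussianInt) = -1 ∨ (u:GaussianInt) = ⟨0,1⟩ ∨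
      (u:GaussianInt) = ⟨0,-1⟩ := by
    have hu' := Units.isUnit u
    have h1 : (u:GaussianInt).norm = 1 := by
      have := Zsqrtd.norm_eq_one_iff.mpr hu'
      have h0 := GaussianInt.norm_nonneg (u:GaussianInt)
      omega
    rw [norm_def] at h1
    set v : GaussianInt := (u:GaussianInt) with hv
    obtain ⟨a,b⟩ := v
    simp only at h1
    have h1a : -1 ≤ a := by nlinarith
    have h2a : a ≤ 1 := by nlinarith
    have h1b : -1 ≤ b := by nlinarith
    have h2b : b ≤ 1 := by nlinarith
    interval_cases a <;> interval_cases b <;> simp_all [Zsqrtd.ext_iff] <;> omega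
  obtain ⟨a, b⟩ := π
  rw [norm_def] at hn
  simp only at hn
  have hkey : b = 0 ∨ a = 0 ∨ a = b ∨ a = -b := by
    rcases hcases with h4 | h4 | h4 | h4 <;> rw [h4] at hu <;>
      · rw [Zsqrtd.ext_iff] at hu
        simp [Zsqrtd.star_mk] at hu
        omega
  rcases hkey with rfl | rfl | rfl | h4
  · exact prime_not_sq hp (a := a) (by nlinarith)
  · exact prime_not_sq hp (a := b) (by nlinarith)
  · exact not_two_dvd hp hp2 (b := a) (by nlinarith)
  · rw [h4] at hn
    exact not_two_dvd hp hp2 (b := b) (by nlinarith)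

lemma forced {γ π l : GaussianInt} {p : ℕ}
    (hprim : ∀ q : ℕ, q.Prime → ¬((q:GaussianInt) ∣ γ))
    (hp : p.Prime) (hp2 : p ≠ 2)
    (hπ : Prime π) (hπγ : π ∣ γ) (hn : π.norm = p)
    (hl : l ∣ γ) (hd : (p:ℤ) ∣ l.norm) : π ∣ l := by
  have hstar : Prime (star π) := prime_of_norm_prime (by
    rw [Zsqrtd.norm_conj, hn]; exact Int.prime_iff_natAbs_prime.mpr (by simpa using hp))
  have hpeq : ((p:ℕ) : GaussianInt) = π * star π := by
    have h' := Zsqrtd.norm_eq_mul_conj π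
    rw [hn] at h'
    exact_mod_cast h'
  have hπp : π ∣ ((p:ℕ) : GaussianInt) := ⟨star π, hpeq⟩
  have h1 : π ∣ l * star l := by
    refine dvd_trans hπp ?_
    have := cast_dvd_mul_conj (γ := l) hd
    exact_mod_cast this
  rcases hπ.dvd_mul.mp h1 with h | h
  · exact h
  · exfalso
    have h2 : star π ∣ l := by simpa using star_dvd h
    obtain ⟨c, hc⟩ := hπγ
    have h4 : star π ∣ π * c := hc ▸ (h2.trans hl)
    rcases hstar.dvd_mul.mp h4 with h5 | h5
    · exact not_star_dvd_self' hp hp2 hn hπ hstar h5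
    · obtain ⟨e, he⟩ := h5
      apply hprim p hp
      exact ⟨e, by rw [hc, he, ← mul_assoc, ← hpeq]⟩

lemma key (m : ℕ) : ∀ γ : GaussianInt,
    (∀ p : ℕ, p.Prime → ¬((p:GaussianInt) ∣ γ)) → ¬ (2:ℤ) ∣ γ.norm → (m:ℤ) ∣ γ.norm →
    (∃ l : GaussianInt, l ∣ γ ∧ l.norm = m) ∧
    (∀ l₁ l₂ : GaussianInt, l₁ ∣ γ → l₁.norm = m → l₂ ∣ γ → l₂.norm = m →
      Associated l₁ l₂) := by
  induction m using Nat.strong_induction_on with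
  | _ m ih =>
  intro γ hprim hodd hmd
  have hm0 : m ≠ 0 := by
    rintro rfl
    simp only [Nat.cast_zero, zero_dvd_iff] at hmd
    exact hodd (hmd ▸ dvd_zero 2)
  by_cases hm1 : m = 1
  · subst hm1
    refine ⟨⟨1, one_dvd _, by simp [norm_def]⟩, ?_⟩
    intro l₁ l₂ _ hn1 _ hn2
    have hu1 : IsUnit l₁ := Zsqrtd.norm_eq_one_iff.mp (by simp [hn1])
    have hu2 : IsUnit l₂ := Zsqrtd.norm_eq_one_iff.mp (by simp [hn2])
    exact (associated_one_iff_isUnit.mpr hu1).trans (associated_one_iff_isUnit.mpr hu2).symm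
  · set p := m.minFac with hpdef
    have hp : p.Prime := Nat.minFac_prime hm1
    have hpm : p ∣ m := Nat.minFac_dvd m
    have hpd : (p:ℤ) ∣ γ.norm := dvd_trans (Int.natCast_dvd_natCast.mpr hpm) hmd
    obtain ⟨π, hπ, hπγ, hn⟩ := exists_prime_norm γ hprim hodd hp hpd
    have hp2 : p ≠ 2 := by
      rintro h2
      rw [h2] at hpd
      exact hodd (by exact_mod_cast hpd)
    obtain ⟨γ', hγ'⟩ := hπγ
    have hπ0 : π ≠ 0 := hπ.ne_zero
    have hp0 : (p:ℤ) ≠ 0 := by exact_mod_cast hp.ne_zero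
    have hnormγ : γ.norm = p * γ'.norm := by rw [hγ', Zsqrtd.norm_mul, hn]
    set m' := m / p with hm'def
    have hm' : m = p * m' := (Nat.mul_div_cancel' hpm).symm
    have hm'd : (m':ℤ) ∣ γ'.norm := by
      have : ((p:ℤ) * m') ∣ (p:ℤ) * γ'.norm := by
        rw [← hnormγ]
        exact_mod_cast (by rw [← hm']; exact hmd : ((p * m' : ℕ) : ℤ) ∣ γ.norm)
      exact (mul_dvd_mul_iff_left hp0).mp this
    have hprim' : ∀ q : ℕ, q.Prime → ¬((q:GaussianInt) ∣ γ') := by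
      intro q hq hd
      exact hprim q hq (hd.trans ⟨π, by rw [hγ']; ring⟩)
    have hodd' : ¬(2:ℤ) ∣ γ'.norm := by
      intro hd
      exact hodd (by rw [hnormγ]; exact hd.mul_left _)
    have hlt : m' < m := Nat.div_lt_self (Nat.pos_of_ne_zero hm0) hp.one_lt
    obtain ⟨⟨l', hl'd, hl'n⟩, huniq'⟩ := ih m' hlt γ' hprim' hodd' hm'd
    have hπγ2 : π ∣ γ := ⟨γ', hγ'⟩
    constructor
    · refine ⟨π * l', by rw [hγ']; exact mul_dvd_mul_left π hl'd, ?_⟩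
      rw [Zsqrtd.norm_mul, hn, hl'n, hm']
      push_cast
      ring
    · intro l₁ l₂ h1 hn1 h2 hn2
      have hpdvd : ∀ l : GaussianInt, l.norm = (m:ℤ) → (p:ℤ) ∣ l.norm := by
        intro l hl
        rw [hl]
        exact_mod_cast Int.natCast_dvd_natCast.mpr hpm
      obtain ⟨l₁', rfl⟩ := forced hprim hp hp2 hπ hπγ2 hn h1 (hpdvd _ hn1)
      obtain ⟨l₂', rfl⟩ := forced hprim hp hp2 hπ hπγ2 hn h2 (hpdvd _ hn2)
      have hd1 : l₁' ∣ γ' := (mul_dvd_mul_iff_left hπ0).mp (by rw [← hγ']; exact h1)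
      have hd2 : l₂' ∣ γ' := (mul_dvd_mul_iff_left hπ0).mp (by rw [← hγ']; exact h2)
      have hn1' : l₁'.norm = (m':ℤ) := by
        have := hn1
        rw [Zsqrtd.norm_mul, hn, hm'] at this
        push_cast at this
        exact mul_left_cancel₀ hp0 this
      have hn2' : l₂'.norm = (m':ℤ) := by
        have := hn2
        rw [Zsqrtd.norm_mul, hn, hm'] at this
        push_cast at this
        exact mul_left_cancel₀ hp0 this
      exact (huniq' l₁' l₂' hd1 hn1' hd2 hn2').mul_left π


end StmtHelper

/-- If `γ ∈ ℤ[i]` is primitive (divisible by no rational prime) and coprime to `2`,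
and `m` is a positive integer dividing `N(γ)`, then the set of divisors `l` of `γ`
with `N(l) = m` has exactly four elements, all mutually associate, and exactly one
of them has positive odd real part. -/
theorem stmt_2 (γ : GaussianInt)
    (hprim : ∀ p : ℕ, p.Prime → ¬ ((p : GaussianInt) ∣ γ))
    (hcop : IsCoprime (2 : GaussianInt) γ)
    (m : ℕ) (hm : 0 < m) (hdvd : (m : ℤ) ∣ γ.norm) :
    {l : GaussianInt | l ∣ γ ∧ l.norm = (m : ℤ)}.ncard = 4 ∧
      (∀ l₁ l₂ : GaussianInt, l₁ ∣ γ → l₁.norm = (m : ℤ) →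
        l₂ ∣ γ → l₂.norm = (m : ℤ) → Associated l₁ l₂) ∧
      ∃! l : GaussianInt, (l ∣ γ ∧ l.norm = (m : ℤ)) ∧ 0 < l.re ∧ Odd l.re := by
  have hodd : ¬ (2:ℤ) ∣ γ.norm := StmtHelper.norm_odd hcop
  obtain ⟨⟨lam, hld, hln⟩, huniq⟩ := StmtHelper.key m γ hprim hodd hdvd
  set I : GaussianInt := ⟨0, 1⟩ with hI
  have hInorm : I.norm = 1 := by simp [StmtHelper.norm_def, hI]
  have hIu : IsUnit I := Zsqrtd.norm_eq_one_iff.mp (by rw [hInorm]; rfl)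
  have hII : I * -I = 1 := by rw [Zsqrtd.ext_iff]; constructor <;> simp [hI]
  -- characterization of the solution set
  have hS : ∀ l : GaussianInt, (l ∣ γ ∧ l.norm = (m:ℤ)) ↔
      (l = lam ∨ l = -lam ∨ l = I * lam ∨ l = -(I * lam)) := by
    intro l
    constructor
    · rintro ⟨hd, hn⟩
      obtain ⟨u, hu⟩ := huniq lam l hld hln hd hn
      rcases StmtHelper.unit_cases u.isUnit with h4 | h4 | h4 | h4 <;> rw [h4] at hu
      · left; rw [← hu, mul_one]
      · right; left; rw [← hu]; ring
      · right; right; left; rw [← hu, hI]; ring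
      · right; right; right; rw [← hu, hI]
        rw [Zsqrtd.ext_iff]; constructor <;> simp
    · have hnegd : -lam ∣ γ := (neg_dvd).mpr hld
      have hId : I * lam ∣ γ := by
        obtain ⟨c, hc⟩ := hld
        exact ⟨-I * c, by rw [hc, show I * lam * (-I * c) = (I * -I) * (lam * c) by ring,
          hII, one_mul]⟩
      have hnId : -(I * lam) ∣ γ := (neg_dvd).mpr hId
      have hInormmul : (I * lam).norm = (m:ℤ) := by rw [Zsqrtd.norm_mul, hInorm, one_mul, hln]
      rintro (rfl | rfl | rfl | rfl)
      · exact ⟨hld, hln⟩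
      · exact ⟨hnegd, by rw [Zsqrtd.norm_neg, hln]⟩
      · exact ⟨hId, hInormmul⟩
      · exact ⟨hnId, by rw [Zsqrtd.norm_neg, hInormmul]⟩
  -- coordinates
  have hab : lam.re * lam.re + lam.im * lam.im = (m:ℤ) := by rw [← hln, StmtHelper.norm_def]
  have hm0 : ¬(lam.re = 0 ∧ lam.im = 0) := by
    rintro ⟨h1, h2⟩
    rw [h1, h2] at hab
    simp at hab
    omega
  have hre1 : (-lam).re = -lam.re := by simp
  have hre2 : (I * lam).re = -lam.im := by simp [hI]
  have hre3 : (-(I * lam)).re = lam.im := by simp [hI]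
  -- parity
  have hmodd : ¬ (2:ℤ) ∣ (m:ℤ) := fun h => hodd (h.trans hdvd)
  have hpar : (lam.re % 2 = 1 ∧ lam.im % 2 = 0) ∨ (lam.re % 2 = 0 ∧ lam.im % 2 = 1) := by
    rcases Int.even_or_odd lam.re with ⟨k, hk⟩ | ⟨k, hk⟩ <;>
      rcases Int.even_or_odd lam.im with ⟨j, hj⟩ | ⟨j, hj⟩
    · exfalso; apply hmodd; rw [← hab]; exact ⟨2*k*k + 2*j*j, by rw [hk, hj]; ring⟩
    · right; omega
    · left; omega
    · exfalso; apply hmodd; rw [← hab]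
      exact ⟨2*k*k + 2*k + 2*j*j + 2*j + 1, by rw [hk, hj]; ring⟩
  -- distinctness
  have hne1 : lam ≠ -lam := by
    intro h; rw [Zsqrtd.ext_iff] at h; simp at h; omega
  have hne2 : lam ≠ I * lam := by
    intro h; rw [Zsqrtd.ext_iff] at h; simp [hI] at h; omega
  have hne3 : lam ≠ -(I * lam) := by
    intro h; rw [Zsqrtd.ext_iff] at h; simp [hI] at h; omega
  have hne4 : -lam ≠ I * lam := by
    intro h; rw [Zsqrtd.ext_iff] at h; simp [hI] at h; omega
  have hne5 : -lam ≠ -(I * lam) := by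
    intro h; rw [Zsqrtd.ext_iff] at h; simp [hI] at h; omega
  have hne6 : I * lam ≠ -(I * lam) := by
    intro h; rw [Zsqrtd.ext_iff] at h; simp [hI] at h; omega
  refine ⟨?_, huniq, ?_⟩
  · have hset : {l : GaussianInt | l ∣ γ ∧ l.norm = (m : ℤ)} =
        ({lam, -lam, I * lam, -(I * lam)} : Set GaussianInt) := by
      ext l
      simp only [Set.mem_setOf_eq, Set.mem_insert_iff, Set.mem_singleton_iff]
      exact hS l
    rw [hset]
    rw [Set.ncard_insert_of_notMem (by simp [hne1, hne2, hne3])]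
    rw [Set.ncard_insert_of_notMem (by simp [hne4, hne5])]
    rw [Set.ncard_pair hne6]
  · -- exactly one with positive odd real part
    rcases hpar with ⟨hA, hB⟩ | ⟨hA, hB⟩
    · -- a odd
      rcases lt_or_gt_of_ne (show lam.re ≠ 0 by omega) with hneg | hpos
      · refine ⟨-lam, ⟨(hS (-lam)).mpr (by tauto), by rw [hre1]; omega,
          by rw [hre1, Int.odd_iff]; omega⟩, ?_⟩
        rintro l ⟨hl, hlp, hlo⟩
        rw [Int.odd_iff] at hlo
        rcases (hS l).mp hl with rfl | rfl | rfl | rfl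
        · omega
        · rfl
        · rw [hre2] at hlp hlo; omega
        · rw [hre3] at hlp hlo; omega
      · refine ⟨lam, ⟨(hS lam).mpr (by tauto), by omega, by rw [Int.odd_iff]; omega⟩, ?_⟩
        rintro l ⟨hl, hlp, hlo⟩
        rw [Int.odd_iff] at hlo
        rcases (hS l).mp hl with rfl | rfl | rfl | rfl
        · rfl
        · rw [hre1] at hlp hlo; omega
        · rw [hre2] at hlp hlo; omega
        · rw [hre3] at hlp hlo; omega
    · -- b odd
      rcases lt_or_gt_of_ne (show lam.im ≠ 0 by omega) with hneg | hpos
      · refine ⟨I * lam, ⟨(hS (I * lam)).mpr (by tauto), by rw [hre2]; omega,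
          by rw [hre2, Int.odd_iff]; omega⟩, ?_⟩
        rintro l ⟨hl, hlp, hlo⟩
        rw [Int.odd_iff] at hlo
        rcases (hS l).mp hl with rfl | rfl | rfl | rfl
        · omega
        · rw [hre1] at hlp hlo; omega
        · rfl
        · rw [hre3] at hlp hlo; omega
      · refine ⟨-(I * lam), ⟨(hS (-(I * lam))).mpr (by tauto), by rw [hre3]; omega,
          by rw [hre3, Int.odd_iff]; omega⟩, ?_⟩
        rintro l ⟨hl, hlp, hlo⟩
        rw [Int.odd_iff] at hlo
        rcases (hS l).mp hl with rfl | rfl | rfl | rfl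
        · omega
        · rw [hre1] at hlp hlo; omega
        · rw [hre2] at hlp hlo; omega
        · rfl
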